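/- For p ∈ [0,1] and T = p·I (the 3×3 matrix with p on the diagonal), the maximum over unit vectors a1, a2, a3, b1, b2, b3, b4 in R^3 of a1ᵀT(b1+b2-b3-b4) + a2ᵀT(b1-b2+b3-b4) + a3ᵀT(b1-b2-b3+b4) equals 4√3·p; consequently this exceeds the classical bound 6 if and only if p > √3/2. -/

import Mathlib

open Matrix

noncomputable def ev17 (x y z : ℝ) : EuclideanSpace ℝ (Fin 3) :=
  (WithLp.equiv 2 (Fin 3 → ℝ)).symm ![x, y, z]

lemma dot_le17 (a v : EuclideanSpace ℝ (Fin 3)) (ha : ‖a‖ = 1) :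
    a ⬝ᵥ (v : Fin 3 → ℝ) ≤ ‖v‖ := by
  have h := real_inner_le_norm a v
  rw [PiLp.inner_apply] at h
  simp only [RCLike.inner_apply, conj_trivial, ha, one_mul] at h
  simpa only [dotProduct, mul_comm] using h

lemma nsq17 (v : EuclideanSpace ℝ (Fin 3)) : ‖v‖ ^ 2 = ∑ i, (v i) ^ 2 := by
  rw [EuclideanSpace.norm_eq, Real.sq_sqrt (by positivity)]
  simp [Real.norm_eq_abs, sq_abs]

set_option maxHeartbeats 2000000 in
theorem stmt_17 (p : ℝ) (hp : p ∈ Set.Icc (0 : ℝ) 1)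
    (T : Matrix (Fin 3) (Fin 3) ℝ) (hT : T = p • (1 : Matrix (Fin 3) (Fin 3) ℝ)) :
    IsGreatest
      {s : ℝ | ∃ a1 a2 a3 b1 b2 b3 b4 : EuclideanSpace ℝ (Fin 3),
        ‖a1‖ = 1 ∧ ‖a2‖ = 1 ∧ ‖a3‖ = 1 ∧
        ‖b1‖ = 1 ∧ ‖b2‖ = 1 ∧ ‖b3‖ = 1 ∧ ‖b4‖ = 1 ∧
        s = a1 ⬝ᵥ T.mulVec (b1 + b2 - b3 - b4) + a2 ⬝ᵥ T.mulVec (b1 - b2 + b3 - b4) +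
            a3 ⬝ᵥ T.mulVec (b1 - b2 - b3 + b4)}
      (4 * Real.sqrt 3 * p) ∧
    (4 * Real.sqrt 3 * p > 6 ↔ p > Real.sqrt 3 / 2) := by
  subst hT
  have h3 : Real.sqrt 3 ^ 2 = 3 := Real.sq_sqrt (by norm_num)
  have h0 : (0 : ℝ) < Real.sqrt 3 := by positivity
  obtain ⟨hp0, hp1⟩ := hp
  refine ⟨⟨?_, ?_⟩, ?_⟩
  · -- membership: explicit optimal vectors
    set q : ℝ := (Real.sqrt 3)⁻¹ with hq
    refine ⟨ev17 1 0 0, ev17 0 1 0, ev17 0 0 1, ev17 q q q, ev17 q (-q) (-q),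
      ev17 (-q) q (-q), ev17 (-q) (-q) q, ?_, ?_, ?_, ?_, ?_, ?_, ?_, ?_⟩
    · rw [EuclideanSpace.norm_eq]; simp [ev17, Fin.sum_univ_three]
    · rw [EuclideanSpace.norm_eq]; simp [ev17, Fin.sum_univ_three]
    · rw [EuclideanSpace.norm_eq]; simp [ev17, Fin.sum_univ_three]
    · rw [EuclideanSpace.norm_eq]
      simp [ev17, Fin.sum_univ_three, Real.norm_eq_abs, sq_abs, hq]; norm_num
    · rw [EuclideanSpace.norm_eq]
      simp [ev17, Fin.sum_univ_three, Real.norm_eq_abs, sq_abs, hq]; norm_num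
    · rw [EuclideanSpace.norm_eq]
      simp [ev17, Fin.sum_univ_three, Real.norm_eq_abs, sq_abs, hq]; norm_num
    · rw [EuclideanSpace.norm_eq]
      simp [ev17, Fin.sum_univ_three, Real.norm_eq_abs, sq_abs, hq]; norm_num
    · simp only [Matrix.smul_mulVec, Matrix.one_mulVec, dotProduct_smul,
        dotProduct, Fin.sum_univ_three]
      simp [ev17, PiLp.add_apply, PiLp.sub_apply, hq]
      have h0' : Real.sqrt 3 ≠ 0 := ne_of_gt h0
      field_simp
      linear_combination 4 * p * h3
  · -- upper bound
    rintro s ⟨a1, a2, a3, b1, b2, b3, b4, ha1, ha2, ha3, hb1, hb2, hb3, hb4, rfl⟩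
    have hnb1 : ‖b1‖ ^ 2 = 1 := by rw [hb1]; norm_num
    have hnb2 : ‖b2‖ ^ 2 = 1 := by rw [hb2]; norm_num
    have hnb3 : ‖b3‖ ^ 2 = 1 := by rw [hb3]; norm_num
    have hnb4 : ‖b4‖ ^ 2 = 1 := by rw [hb4]; norm_num
    have key : ‖(b1 + b2 - b3 - b4)‖ ^ 2 + ‖(b1 - b2 + b3 - b4)‖ ^ 2 +
        ‖(b1 - b2 - b3 + b4)‖ ^ 2 + ‖b1 + b2 + b3 + b4‖ ^ 2 =
        4 * (‖b1‖ ^ 2 + ‖b2‖ ^ 2 + ‖b3‖ ^ 2 + ‖b4‖ ^ 2) := by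
      simp only [nsq17, Fin.sum_univ_three, PiLp.add_apply, PiLp.sub_apply]
      ring
    have hsq : ‖(b1 + b2 - b3 - b4)‖ ^ 2 + ‖(b1 - b2 + b3 - b4)‖ ^ 2 +
        ‖(b1 - b2 - b3 + b4)‖ ^ 2 ≤ 16 := by
      nlinarith [sq_nonneg ‖b1 + b2 + b3 + b4‖]
    have hsum : ‖(b1 + b2 - b3 - b4)‖ + ‖(b1 - b2 + b3 - b4)‖ + ‖(b1 - b2 - b3 + b4)‖ ≤
        4 * Real.sqrt 3 := by
      by_contra h
      push_neg at h
      nlinarith [sq_nonneg (‖(b1 + b2 - b3 - b4)‖ - ‖(b1 - b2 + b3 - b4)‖),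
        sq_nonneg (‖(b1 + b2 - b3 - b4)‖ - ‖(b1 - b2 - b3 + b4)‖),
        sq_nonneg (‖(b1 - b2 + b3 - b4)‖ - ‖(b1 - b2 - b3 + b4)‖),
        norm_nonneg (b1 + b2 - b3 - b4), norm_nonneg (b1 - b2 + b3 - b4),
        norm_nonneg (b1 - b2 - b3 + b4)]
    have hd1 := dot_le17 a1 (b1 + b2 - b3 - b4) ha1
    have hd2 := dot_le17 a2 (b1 - b2 + b3 - b4) ha2
    have hd3 := dot_le17 a3 (b1 - b2 - b3 + b4) ha3
    simp only [Matrix.smul_mulVec, Matrix.one_mulVec, dotProduct_smul,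
      smul_eq_mul]
    simp only [WithLp.ofLp_add, WithLp.ofLp_sub] at hd1 hd2 hd3
    nlinarith [hd1, hd2, hd3, hsum, hp0, norm_nonneg (b1 + b2 - b3 - b4),
      norm_nonneg (b1 - b2 + b3 - b4), norm_nonneg (b1 - b2 - b3 + b4)]
  · constructor <;> intro h <;> nlinarith
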